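/- Let G ∼ G_{n,m} with m = cn and c ≤ n/10¹⁰, and let W be any nonempty set of unordered pairs of vertices of [n] (possible edges). Then Pr[|E(G) ∩ W| ≥ |W|/10⁹] ≤ exp(−3|W|/10¹⁰). -/

import Mathlib

open scoped Classical

noncomputable section

namespace Giso


lemma pow_self_le_exp_factorial (k : ℕ) :
    (k : ℝ) ^ k ≤ Real.exp 1 ^ k * (k.factorial : ℝ) := by
  induction k with
  | zero => simp
  | succ k ih =>
    rcases Nat.eq_zero_or_pos k with hk | hk
    · subst hk; simpa using Real.one_le_exp zero_le_one
    · have hkR : (0:ℝ) < k := by exact_mod_cast hk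
      have h1 : (1 + 1/(k:ℝ)) ≤ Real.exp (1/(k:ℝ)) := by
        have := Real.add_one_le_exp (1/(k:ℝ)); linarith
      have h2 : (1 + 1/(k:ℝ)) ^ k ≤ Real.exp 1 := by
        calc (1 + 1/(k:ℝ)) ^ k ≤ Real.exp (1/(k:ℝ)) ^ k := by
              apply pow_le_pow_left₀ (by positivity) h1
          _ = Real.exp ((k:ℝ) * (1/(k:ℝ))) := by rw [← Real.exp_nat_mul]
          _ = Real.exp 1 := by rw [mul_one_div, div_self (ne_of_gt hkR)]
      have heq : ((k:ℝ) + 1) ^ k = (k:ℝ) ^ k * (1 + 1/(k:ℝ)) ^ k := by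
        rw [← mul_pow]; congr 1; field_simp
      have hexp1 : (1:ℝ) ≤ Real.exp 1 := Real.one_le_exp zero_le_one
      have hkk : (0:ℝ) ≤ (k:ℝ) ^ k := by positivity
      have h3 : ((k:ℝ) + 1) ^ k ≤ Real.exp 1 ^ k * (k.factorial : ℝ) * Real.exp 1 := by
        rw [heq]
        calc (k:ℝ) ^ k * (1 + 1/(k:ℝ)) ^ k ≤ (k:ℝ) ^ k * Real.exp 1 :=
              mul_le_mul_of_nonneg_left h2 hkk
          _ ≤ (Real.exp 1 ^ k * (k.factorial : ℝ)) * Real.exp 1 :=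
              mul_le_mul_of_nonneg_right ih (by positivity)
      have hfac : ((k+1).factorial : ℝ) = ((k:ℝ)+1) * (k.factorial : ℝ) := by
        rw [Nat.factorial_succ]; push_cast; ring
      calc ((k+1:ℕ):ℝ) ^ (k+1) = ((k:ℝ)+1) * ((k:ℝ)+1) ^ k := by push_cast; ring
        _ ≤ ((k:ℝ)+1) * (Real.exp 1 ^ k * (k.factorial : ℝ) * Real.exp 1) := by
            apply mul_le_mul_of_nonneg_left h3 (by positivity)
        _ = Real.exp 1 ^ (k+1) * ((k+1).factorial : ℝ) := by
            rw [hfac, pow_succ]; ring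

lemma chooseA (N m : ℕ) (hmN : m < N) :
    ∀ k, k ≤ m → ((N.choose (m - k) : ℝ)) ≤
      (N.choose m : ℝ) * ((m : ℝ) / ((N : ℝ) - m)) ^ k := by
  intro k
  induction k with
  | zero => intro _; simp
  | succ k ih =>
    intro hk
    have hkm : k ≤ m := le_of_lt (Nat.lt_of_succ_le hk)
    have ih' := ih hkm
    have hj1 : m - k = (m - (k+1)) + 1 := by omega
    set j := m - (k+1) with hj
    have hjN : j < N := by omega
    have hjm : j + 1 ≤ m := by omega
    have hrec := Nat.choose_succ_right_eq N j
    have hrecR : (N.choose (j+1) : ℝ) * ((j:ℝ)+1) = (N.choose j : ℝ) * ((N:ℝ) - j) := by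
      have := congrArg (fun x : ℕ => (x : ℝ)) hrec
      push_cast [Nat.cast_sub hjN.le] at this
      push_cast
      linarith [this]
    have hNj : (0:ℝ) < (N:ℝ) - j := by
      have : (j:ℝ) < N := by exact_mod_cast hjN
      linarith
    have hNm : (0:ℝ) < (N:ℝ) - m := by
      have : (m:ℝ) < N := by exact_mod_cast hmN
      linarith
    set C := (N.choose m : ℝ)
    set q := (m:ℝ) / ((N:ℝ) - m)
    have hq0 : 0 ≤ q := by positivity
    have hCq : 0 ≤ C * q ^ k := by positivity
    -- N.choose j * (N - j) = N.choose (j+1) * (j+1) ≤ (C q^k) * m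
    have step : (N.choose j : ℝ) * ((N:ℝ) - j) ≤ (C * q ^ k) * m := by
      rw [← hrecR]
      have h1 : (N.choose (j+1) : ℝ) ≤ C * q ^ k := by rw [hj1] at ih'; exact ih'
      have h2 : ((j:ℝ)+1) ≤ m := by exact_mod_cast hjm
      apply mul_le_mul h1 h2 (by positivity) hCq
    have : (N.choose j : ℝ) ≤ (C * q ^ k) * m / ((N:ℝ) - j) := by
      rw [le_div_iff₀ hNj]; exact step
    calc (N.choose j : ℝ) ≤ (C * q ^ k) * m / ((N:ℝ) - j) := this
      _ ≤ (C * q ^ k) * m / ((N:ℝ) - m) := by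
          apply div_le_div_of_nonneg_left (by positivity) hNm
          · have : (j:ℝ) ≤ m := by exact_mod_cast hjm.trans' (Nat.le_succ j)
            linarith
      _ = C * q ^ (k+1) := by rw [pow_succ]; unfold q; ring



/-- Probability of `P` under the uniform distribution on the finite set `s`. -/
def prob {Ω : Type*} (s : Finset Ω) (P : Ω → Prop) : ℝ :=
  ((s.filter P).card : ℝ) / (s.card : ℝ)

/-- The sample space of `G_{n,m}`: edge sets of simple graphs on `[n]` with exactly
`m` edges. -/
def graphSpace (n m : ℕ) : Finset (Finset (Sym2 (Fin n))) :=
  Finset.univ.filter fun E => E.card = m ∧ ∀ e ∈ E, ¬ e.IsDiag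

/-- Let `G ∼ G_{n,m}` with `m = cn` and `c ≤ n/10¹⁰`, and let `W`
be any nonempty set of possible edges (non-diagonal unordered pairs).  Then
`Pr[|E(G) ∩ W| ≥ |W|/10⁹] ≤ exp(−3|W|/10¹⁰)`. -/
theorem many_edges_in_W (n m : ℕ) (c : ℝ) (hm : (m : ℝ) = c * n)
    (hc : c ≤ (n : ℝ) / 10 ^ 10)
    (W : Finset (Sym2 (Fin n))) (hWdiag : ∀ e ∈ W, ¬ e.IsDiag) (hW : W.Nonempty) :
    prob (graphSpace n m) (fun E => (W.card : ℝ) / 10 ^ 9 ≤ ((E ∩ W).card : ℝ)) ≤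
      Real.exp (-3 * W.card / 10 ^ 10) := by
  have hexppos : (0:ℝ) < Real.exp (-3 * W.card / 10 ^ 10) := Real.exp_pos _
  set w := W.card with hw
  set k := ⌈(w:ℝ)/10^9⌉₊ with hkdef
  have hw1 : 1 ≤ w := Finset.card_pos.mpr hW
  have hwpos : (0:ℝ) < (w:ℝ)/10^9 := by
    have : (0:ℝ) < w := by exact_mod_cast hw1
    positivity
  have hk1 : 1 ≤ k := by
    rw [hkdef]; exact_mod_cast Nat.ceil_pos.mpr hwpos
  have hkw : (w:ℝ) ≤ 10^9 * k := by
    have := Nat.le_ceil ((w:ℝ)/10^9)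
    rw [div_le_iff₀ (by norm_num : (0:ℝ) < 10^9)] at this
    rw [← hkdef] at this
    linarith [this]
  -- rewrite the filter with the integer threshold
  have hfilt : (graphSpace n m).filter (fun E => (w:ℝ)/10^9 ≤ ((E ∩ W).card : ℝ))
      = (graphSpace n m).filter (fun E => k ≤ (E ∩ W).card) := by
    apply Finset.filter_congr
    intro E _
    exact (Nat.ceil_le).symm
  rw [prob, hfilt]
  by_cases hkm : m < k
  · -- threshold exceeds total edges: empty event
    have : (graphSpace n m).filter (fun E => k ≤ (E ∩ W).card) = ∅ := by
      apply Finset.filter_false_of_mem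
      intro E hE
      simp only [graphSpace, Finset.mem_filter] at hE
      have h1 : (E ∩ W).card ≤ E.card := Finset.card_le_card (Finset.inter_subset_left)
      omega
    rw [this]
    simp only [Finset.card_empty, Nat.cast_zero, zero_div]
    exact le_of_lt hexppos
  push_neg at hkm  -- k ≤ m
  -- the ambient set of non-diagonal pairs
  set D := (Finset.univ.filter fun e : Sym2 (Fin n) => ¬ e.IsDiag) with hD
  set N := D.card with hNdef
  have hN : N = n.choose 2 := by
    rw [hNdef, hD, ← Fintype.card_subtype]
    simpa using Sym2.card_subtype_not_diag (α := Fin n)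
  have hGS : graphSpace n m = D.powersetCard m := by
    ext E
    simp only [graphSpace, Finset.mem_filter, Finset.mem_univ, true_and,
      Finset.mem_powersetCard, hD, Finset.subset_iff]
    constructor
    · rintro ⟨h1, h2⟩
      exact ⟨fun e he => by simp [h2 e he], h1⟩
    · rintro ⟨h1, h2⟩
      refine ⟨h2, fun e he => ?_⟩
      have := h1 e he
      simpa using this
  have hcardGS : (graphSpace n m).card = N.choose m := by
    rw [hGS, Finset.card_powersetCard]
  -- the counting bound via an injection
  set B := (graphSpace n m).filter (fun E => k ≤ (E ∩ W).card) with hBdef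
  let pick : Finset (Sym2 (Fin n)) → Finset (Sym2 (Fin n)) := fun E =>
    if h : k ≤ (E ∩ W).card then (Finset.exists_subset_card_eq h).choose else ∅
  have hpick : ∀ E, k ≤ (E ∩ W).card → pick E ⊆ E ∩ W ∧ (pick E).card = k := by
    intro E h
    simp only [pick, dif_pos h]
    exact (Finset.exists_subset_card_eq h).choose_spec
  have hBcard : B.card ≤ w.choose k * N.choose (m - k) := by
    have hinj : B.card ≤ ((W.powersetCard k) ×ˢ (D.powersetCard (m - k))).card := by
      apply Finset.card_le_card_of_injOn (fun E => (pick E, E \ pick E))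
      · intro E hE
        simp only [Finset.mem_coe, hBdef, Finset.mem_filter] at hE
        obtain ⟨hEgs, hEk⟩ := hE
        rw [graphSpace, Finset.mem_filter] at hEgs
        obtain ⟨-, hEc, hEd⟩ := hEgs
        obtain ⟨hS, hScard⟩ := hpick E hEk
        have hSE : pick E ⊆ E := hS.trans Finset.inter_subset_left
        rw [Finset.mem_coe, Finset.mem_product, Finset.mem_powersetCard, Finset.mem_powersetCard]
        refine ⟨⟨hS.trans Finset.inter_subset_right, hScard⟩, ?_, ?_⟩
        · intro e he
          rw [Finset.mem_sdiff] at he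
          simp only [hD, Finset.mem_filter, Finset.mem_univ, true_and]
          exact hEd e he.1
        · rw [Finset.card_sdiff_of_subset hSE, hEc, hScard]
      · intro E1 h1 E2 h2 heq
        simp only [Finset.mem_coe] at h1 h2
        rw [Prod.mk.injEq] at heq
        obtain ⟨hp, hd⟩ := heq
        simp only [hBdef, Finset.mem_filter] at h1 h2
        have hS1 : pick E1 ⊆ E1 := (hpick E1 h1.2).1.trans Finset.inter_subset_left
        have hS2 : pick E2 ⊆ E2 := (hpick E2 h2.2).1.trans Finset.inter_subset_left
        calc E1 = pick E1 ∪ (E1 \ pick E1) := (Finset.union_sdiff_of_subset hS1).symm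
          _ = pick E2 ∪ (E2 \ pick E2) := by rw [hd, hp]
          _ = E2 := Finset.union_sdiff_of_subset hS2
    rwa [Finset.card_product, Finset.card_powersetCard, Finset.card_powersetCard] at hinj
  -- real-number setup
  have hm1 : 1 ≤ m := le_trans hk1 hkm
  have hmR1 : (1:ℝ) ≤ m := by exact_mod_cast hm1
  have hn0 : (0:ℝ) ≤ n := Nat.cast_nonneg n
  have hc0 : 0 ≤ c := by
    rcases Nat.eq_zero_or_pos n with h0 | h0
    · exfalso; rw [h0] at hm; simp at hm; omega
    · have hnR : (0:ℝ) < n := by exact_mod_cast h0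
      by_contra hneg
      push_neg at hneg
      have : (m:ℝ) < 0 := by rw [hm]; exact mul_neg_of_neg_of_pos hneg hnR
      have : (0:ℝ) ≤ m := Nat.cast_nonneg m
      linarith
  have hmn2 : (m:ℝ) ≤ (n:ℝ)^2 / 10^10 := by
    rw [hm]
    calc c * n ≤ ((n:ℝ)/10^10) * n := mul_le_mul_of_nonneg_right hc hn0
      _ = (n:ℝ)^2/10^10 := by ring
  have hn2 : (10^10:ℝ) ≤ (n:ℝ)^2 := by linarith [hmn2, hmR1]
  have hn5 : (10^5:ℝ) ≤ n := by
    by_contra h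
    push_neg at h
    have : (n:ℝ)*(n:ℝ) < 10^5 * (10^5:ℝ) :=
      mul_self_lt_mul_self hn0 h
    have h2 : (n:ℝ)^2 = (n:ℝ)*(n:ℝ) := pow_two (n:ℝ)
    norm_num at this
    linarith [hn2]
  have hp : (10^5:ℝ) * n ≤ (n:ℝ)*(n:ℝ) := mul_le_mul_of_nonneg_right hn5 hn0
  have hsq : (n:ℝ)^2 = (n:ℝ)*(n:ℝ) := pow_two (n:ℝ)
  have hNr : (N:ℝ) = (n:ℝ) * ((n:ℝ) - 1) / 2 := by
    rw [hN, Nat.cast_choose_two]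
  have hmN : (m:ℝ) < (N:ℝ) := by
    rw [hNr]; rw [hsq] at hn2 hmn2; linarith
  have hmNnat : m < N := by exact_mod_cast hmN
  set C := ((N.choose m : ℕ) : ℝ) with hCdef
  have hC : (0:ℝ) < C := by
    rw [hCdef]; exact_mod_cast Nat.choose_pos (le_of_lt hmNnat)
  have hNm0 : (0:ℝ) < (N:ℝ) - m := by linarith
  set q := (m:ℝ)/((N:ℝ)-m) with hqdef
  have hq0 : (0:ℝ) ≤ q := by positivity
  have hkpos : (0:ℝ) < k := by exact_mod_cast hk1
  have hfacpos : (0:ℝ) < (k.factorial : ℝ) := by exact_mod_cast k.factorial_pos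
  have hw0 : (0:ℝ) ≤ w := Nat.cast_nonneg w
  set x := Real.exp 1 * w * m / ((k:ℝ) * ((N:ℝ) - m)) with hxdef
  have hx0 : 0 ≤ x := by positivity
  -- the base is at most exp(-3/10)
  have hxexp : x ≤ Real.exp (-(3/10)) := by
    have h7 : (7/10:ℝ) ≤ Real.exp (-(3/10)) := by
      have := Real.add_one_le_exp (-(3/10):ℝ); linarith
    refine le_trans ?_ h7
    rw [hxdef, div_le_iff₀ (by positivity)]
    have he : Real.exp 1 < 2.7182818286 := Real.exp_one_lt_d9
    have hstep1 : Real.exp 1 * 10^9 * (m:ℝ) ≤ 7/10 * ((N:ℝ) - m) := by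
      have hA : Real.exp 1 * (m:ℝ) ≤ 2.7182818286 * ((n:ℝ)^2/10^10) :=
        mul_le_mul he.le hmn2 (Nat.cast_nonneg m) (by norm_num)
      rw [hNr]; rw [hsq] at hA hmn2
      linarith [hA, hmn2, hp]
    calc Real.exp 1 * w * m ≤ Real.exp 1 * (10^9 * k) * m := by
          have h0 : (0:ℝ) ≤ m := Nat.cast_nonneg m
          have h1 : (0:ℝ) ≤ Real.exp 1 := (Real.exp_pos 1).le
          exact mul_le_mul_of_nonneg_right (mul_le_mul_of_nonneg_left hkw h1) h0
      _ = (k:ℝ) * (Real.exp 1 * 10^9 * m) := by ring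
      _ ≤ (k:ℝ) * (7/10 * ((N:ℝ) - m)) := by
          exact mul_le_mul_of_nonneg_left hstep1 (le_of_lt hkpos)
      _ = 7/10 * ((k:ℝ) * ((N:ℝ) - m)) := by ring
  -- the main chain
  have hchoosefrac : ((N.choose (m-k) : ℕ) : ℝ) ≤ C * q ^ k := chooseA N m hmNnat k hkm
  have hchain : ((B.card : ℕ) : ℝ) / C ≤ x ^ k := by
    have hwk : ((w.choose k : ℕ) : ℝ) ≤ (w:ℝ)^k / (k.factorial : ℝ) :=
      Nat.choose_le_pow_div k w
    have hfackey : (w:ℝ)^k / (k.factorial : ℝ) ≤ (Real.exp 1 * w / k)^k := by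
      rw [div_pow, div_le_div_iff₀ hfacpos (by positivity)]
      have h1 : (k:ℝ)^k ≤ Real.exp 1 ^ k * (k.factorial : ℝ) := pow_self_le_exp_factorial k
      have h2 : (0:ℝ) ≤ (w:ℝ)^k := by positivity
      calc (w:ℝ)^k * (k:ℝ)^k ≤ (w:ℝ)^k * (Real.exp 1 ^ k * (k.factorial : ℝ)) :=
            mul_le_mul_of_nonneg_left h1 h2
        _ = (Real.exp 1 * w)^k * (k.factorial : ℝ) := by rw [mul_pow]; ring
    calc ((B.card : ℕ) : ℝ) / C ≤ ((w.choose k * N.choose (m - k) : ℕ) : ℝ) / C := by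
          have : ((B.card : ℕ) : ℝ) ≤ ((w.choose k * N.choose (m - k) : ℕ) : ℝ) := by
            exact_mod_cast hBcard
          gcongr
      _ = ((w.choose k : ℕ) : ℝ) * (((N.choose (m-k) : ℕ) : ℝ) / C) := by
          push_cast; ring
      _ ≤ ((w.choose k : ℕ) : ℝ) * q ^ k := by
          apply mul_le_mul_of_nonneg_left ?_ (Nat.cast_nonneg _)
          rw [div_le_iff₀ hC]
          calc ((N.choose (m-k) : ℕ) : ℝ) ≤ C * q ^ k := hchoosefrac
            _ = q ^ k * C := by ring
      _ ≤ ((w:ℝ)^k / (k.factorial : ℝ)) * q ^ k := by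
          exact mul_le_mul_of_nonneg_right hwk (by positivity)
      _ ≤ (Real.exp 1 * w / k)^k * q ^ k := by
          exact mul_le_mul_of_nonneg_right hfackey (by positivity)
      _ = x ^ k := by
          rw [← mul_pow, hxdef, hqdef]
          congr 1
          field_simp
  have hfin : x ^ k ≤ Real.exp (-3 * w / 10^10) := by
    calc x ^ k ≤ Real.exp (-(3/10)) ^ k := pow_le_pow_left₀ hx0 hxexp k
      _ = Real.exp ((k:ℝ) * (-(3/10))) := by rw [Real.exp_nat_mul]
      _ ≤ Real.exp (-3 * w / 10^10) := by
          apply Real.exp_le_exp.mpr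
          linarith [hkw]
  rw [hcardGS]
  exact le_trans hchain hfin


end Giso
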